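/- Let A be a complex symmetric n×n matrix (Aᵀ = A) with I − AᴴA positive definite. Then A·(I − AᴴA)^{−1/2} = (I − AAᴴ)^{−1/2}·A, where the inverse square roots are the positive definite ones. -/

import Mathlib

open Matrix
open scoped ComplexOrder

/-- For complex symmetric `A` with `I − AᴴA` positive definite, the positive
definite inverse square roots `Λ = (I − AᴴA)^{−1/2}` and `Λ̄ = (I − AAᴴ)^{−1/2}`
(characterized by positive definiteness and `Λ·Λ·(I − AᴴA) = I`, `Λ̄·Λ̄·(I − AAᴴ) = I`)
satisfy `A·Λ = Λ̄·A`. -/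
theorem symmetric_commutes_with_inverse_sqrt (n : ℕ)
    (A Lam Lamb : Matrix (Fin n) (Fin n) ℂ)
    (hA : Aᵀ = A) (hApd : ((1 : Matrix (Fin n) (Fin n) ℂ) - Aᴴ * A).PosDef)
    (hLam : Lam.PosDef)
    (hLamSq : Lam * Lam * ((1 : Matrix (Fin n) (Fin n) ℂ) - Aᴴ * A) = 1)
    (hLamb : Lamb.PosDef)
    (hLambSq : Lamb * Lamb * ((1 : Matrix (Fin n) (Fin n) ℂ) - A * Aᴴ) = 1) :
    A * Lam = Lamb * A := by
  set S : Matrix (Fin n) (Fin n) ℂ := 1 - Aᴴ * A with hSdef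
  set T : Matrix (Fin n) (Fin n) ℂ := 1 - A * Aᴴ with hTdef
  have hAS : A * S = T * A := by
    simp [hSdef, hTdef, Matrix.mul_sub, Matrix.sub_mul, Matrix.mul_assoc]
  have hSL : S * (Lam * Lam) = 1 := mul_eq_one_comm.mp hLamSq
  have h1 : (Lamb * Lamb) * A = A * (Lam * Lam) := by
    have e0 : Lamb * Lamb * (A * S) * (Lam * Lam) = Lamb * Lamb * A := by
      rw [Matrix.mul_assoc (Lamb * Lamb) (A * S) (Lam * Lam), Matrix.mul_assoc A S, hSL,
        Matrix.mul_one]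
    rw [← e0, hAS, ← Matrix.mul_assoc (Lamb * Lamb) T A, hLambSq, Matrix.one_mul]
  set M : Matrix (Fin n) (Fin n) ℂ := A * Lam - Lamb * A with hMdef
  have key : Lamb * M = -(M * Lam) := by
    have h2 : Lamb * M + M * Lam = 0 := by
      simp only [hMdef, Matrix.mul_sub, Matrix.sub_mul, ← Matrix.mul_assoc, h1,
        ← Matrix.mul_assoc]
      abel
    exact eq_neg_of_add_eq_zero_left h2
  have hH := hLam.1
  set U : Matrix (Fin n) (Fin n) ℂ := (hH.eigenvectorUnitary : Matrix (Fin n) (Fin n) ℂ)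
    with hUdef
  have hUU : star U * U = 1 := hH.eigenvectorUnitary.2.1
  have hUU' : U * star U = 1 := hH.eigenvectorUnitary.2.2
  set d := hH.eigenvalues with hddef
  have hspec : Lam = U * diagonal (RCLike.ofReal ∘ d) * star U := hH.spectral_theorem
  set N : Matrix (Fin n) (Fin n) ℂ := M * U with hNdef
  have hN : Lamb * N = -(N * diagonal (RCLike.ofReal ∘ d)) := by
    calc Lamb * N = Lamb * M * U := by rw [hNdef, Matrix.mul_assoc]
    _ = -(M * Lam) * U := by rw [key]
    _ = -(M * (U * diagonal (RCLike.ofReal ∘ d) * star U) * U) := by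
        rw [hspec, Matrix.neg_mul]
    _ = -(N * diagonal (RCLike.ofReal ∘ d)) := by
        rw [hNdef]
        simp only [Matrix.neg_mul, Matrix.mul_assoc, hUU, Matrix.mul_one]
  have hcol : ∀ j, (fun i => N i j) = 0 := by
    intro j
    by_contra hx
    have hpos := hLamb.dotProduct_mulVec_pos hx
    have hmv : Lamb *ᵥ (fun i => N i j) = (-(d j : ℂ)) • (fun i => N i j) := by
      funext i
      have h3 := congrFun (congrFun hN i) j
      simp only [Matrix.mul_apply, Matrix.neg_apply, Matrix.diagonal_apply, Function.comp_apply,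
        mul_ite, mul_zero, Finset.sum_ite_eq', Finset.mem_univ, if_true] at h3
      simpa [Matrix.mulVec, dotProduct, mul_comm] using h3
    rw [hmv] at hpos
    have hx' : (0:ℂ) < dotProduct (star fun i => N i j) (fun i => N i j) :=
      dotProduct_star_self_pos_iff.mpr hx
    rw [dotProduct_smul] at hpos
    have hd : (0:ℂ) < (d j : ℂ) := by
      exact Complex.zero_lt_real.mpr (hLam.eigenvalues_pos j)
    have : (-(d j : ℂ)) • dotProduct (star fun i => N i j) (fun i => N i j) < 0 := by
      rw [smul_eq_mul]
      exact mul_neg_of_neg_of_pos (neg_neg_of_pos hd) hx'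
    exact absurd (hpos.trans this) (lt_irrefl 0)
  have hNz : N = 0 := by
    ext i j
    exact congrFun (hcol j) i
  have hMz : M = 0 := by
    have : M * (U * star U) = 0 := by
      rw [← Matrix.mul_assoc, ← hNdef, hNz, Matrix.zero_mul]
    rwa [hUU', Matrix.mul_one] at this
  have := sub_eq_zero.mp hMz
  exact this
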